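/- Let U : ℝ → ℝ be continuous, symmetric (U(−s) = U(s)) and satisfy (A0), and let β > 0. Let Λ_even ⊂ E^d be finite, let Λ = Λ_even ∪ {x + e_i : x ∈ Λ_even, i ∈ I} be its associated set, and Λ_odd = Λ ∩ O^d. Then for every boundary condition ψ : ℤ^d → ℝ, the pushforward of the finite-volume Gibbs measure ν_{Λ,ψ} under the restriction map φ ↦ (φ(x))_{x∈E^d} is the probability measure on ℝ^{E^d} under which φ(x) = ψ(x) for x ∈ E^d∖Λ_even and the coordinates (φ(x))_{x∈Λ_even} have joint density proportional to exp( − Σ_{x∈Λ_odd} F_x( (φ(x+e_i))_{i∈I} ) ), where F_x( (a_i)_{i∈I} ) = −log ∫_ℝ exp( −2β Σ_{i∈I} U(a_i − t) ) dt. -/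

import Mathlib

open MeasureTheory Real Filter

noncomputable section
open scoped Classical

/-- The lattice `ℤ^d`. -/
abbrev LatZ (d : ℕ) : Type := Fin d → ℤ

/-- The `2d` signed unit vectors `e_i, -e_i` of `ℤ^d`, indexed by `Fin d × Bool`. -/
def dirv (d : ℕ) (p : Fin d × Bool) : LatZ d :=
  if p.2 then Pi.single p.1 1 else -Pi.single p.1 1

/-- Even sites of `ℤ^d`. -/
abbrev Esites (d : ℕ) : Type := {x : LatZ d // Even (∑ i, x i)}

/-- The set `Λ` associated to a finite set `Λ_even` of even sites:
`Λ = Λ_even ∪ {x + e_i : x ∈ Λ_even, i ∈ I}`. -/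
def assocSet (d : ℕ) (Λev : Finset (LatZ d)) : Finset (LatZ d) :=
  Λev ∪ Λev.biUnion fun x => Finset.image (fun p => x + dirv d p) Finset.univ

/-- The gradient Hamiltonian `H_{Λ,ψ}` (only the values of the full configuration `φ`
matter; the boundary condition enters through the extension map below).
The first sum is over ordered nearest-neighbour pairs inside `Λ`, the second over pairs
from `Λ` to its outer boundary. -/
def gibbsH (d : ℕ) (U : ℝ → ℝ) (Λ : Finset (LatZ d)) (φ : LatZ d → ℝ) : ℝ :=
  (∑ p : Fin d × Bool, ∑ x ∈ Λ.filter (fun x => x + dirv d p ∈ Λ),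
      U (φ (x + dirv d p) - φ x))
  + 2 * ∑ p : Fin d × Bool, ∑ x ∈ Λ.filter (fun x => x + dirv d p ∉ Λ),
      U (φ (x + dirv d p) - φ x)

/-- Extension of a configuration on `Λ` by the boundary condition `ψ` outside `Λ`. -/
def extLam (d : ℕ) (Λ : Finset (LatZ d)) (ψ : LatZ d → ℝ) (φ : {x : LatZ d // x ∈ Λ} → ℝ) :
    LatZ d → ℝ :=
  fun x => if h : x ∈ Λ then φ ⟨x, h⟩ else ψ x

/-- Normalising constant `Z_{Λ,ψ}`. -/
def gibbsZ (β : ℝ) (d : ℕ) (U : ℝ → ℝ) (Λ : Finset (LatZ d)) (ψ : LatZ d → ℝ) : ℝ :=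
  ∫ φ : {x : LatZ d // x ∈ Λ} → ℝ, Real.exp (-β * gibbsH d U Λ (extLam d Λ ψ φ))

/-- The finite-volume Gibbs measure `ν_{Λ,ψ}`, a measure on `ℝ^{ℤ^d}`: coordinates
outside `Λ` are fixed to `ψ` and the coordinates in `Λ` have density proportional to
`exp(-β H_{Λ,ψ})`. -/
def gibbsMeasure (β : ℝ) (d : ℕ) (U : ℝ → ℝ) (Λ : Finset (LatZ d)) (ψ : LatZ d → ℝ) :
    Measure (LatZ d → ℝ) :=
  Measure.map (extLam d Λ ψ)
    (volume.withDensity fun φ : {x : LatZ d // x ∈ Λ} → ℝ =>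
      ENNReal.ofReal (Real.exp (-β * gibbsH d U Λ (extLam d Λ ψ φ)) / gibbsZ β d U Λ ψ))

/-- The coarse-grained multi-body potential
`F_x((φ(x+e_i))_{i∈I}) = -log ∫ exp(-2β Σ_{i∈I} U(φ(x+e_i) - t)) dt`. -/
def Fodd (β : ℝ) (d : ℕ) (U : ℝ → ℝ) (φ : LatZ d → ℝ) (x : LatZ d) : ℝ :=
  - Real.log (∫ t : ℝ, Real.exp (-(2*β) * ∑ p : Fin d × Bool, U (φ (x + dirv d p) - t)))

/-- Turn a configuration on the even sites into a full lattice configuration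
(junk value `0` at odd sites; never used below). -/
def fullOf (d : ℕ) (f : Esites d → ℝ) : LatZ d → ℝ :=
  fun y => if h : Even (∑ i, y i) then f ⟨y, h⟩ else 0

/-- Extension of a configuration on `Λ_even` by the boundary condition `ψ` on the
remaining even sites. -/
def extEv (d : ℕ) (Λev : Finset (LatZ d)) (ψ : LatZ d → ℝ)
    (φe : {x : LatZ d // x ∈ Λev} → ℝ) : Esites d → ℝ :=
  fun x => if h : (x : LatZ d) ∈ Λev then φe ⟨x, h⟩ else ψ x

/-- The odd part of the associated set `Λ`. -/
def oddPart (d : ℕ) (Λev : Finset (LatZ d)) : Finset (LatZ d) :=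
  (assocSet d Λev).filter fun x => ¬ Even (∑ i, x i)

/-- Even normalising constant. -/
def evenZ (β : ℝ) (d : ℕ) (U : ℝ → ℝ) (Λev : Finset (LatZ d)) (ψ : LatZ d → ℝ) : ℝ :=
  ∫ φe : {x : LatZ d // x ∈ Λev} → ℝ,
    Real.exp (-(∑ x ∈ oddPart d Λev, Fodd β d U (fullOf d (extEv d Λev ψ φe)) x))

/-- The induced measure on the even-site configurations: coordinates on
`E^d ∖ Λ_even` are fixed to `ψ`, and the coordinates in `Λ_even` have joint density
proportional to `exp(-Σ_{x∈Λ_odd} F_x((φ(x+e_i))_{i∈I}))`. -/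
def evenGibbs (β : ℝ) (d : ℕ) (U : ℝ → ℝ) (Λev : Finset (LatZ d)) (ψ : LatZ d → ℝ) :
    Measure (Esites d → ℝ) :=
  Measure.map (extEv d Λev ψ)
    (volume.withDensity fun φe : {x : LatZ d // x ∈ Λev} → ℝ =>
      ENNReal.ofReal
        (Real.exp (-(∑ x ∈ oddPart d Λev, Fodd β d U (fullOf d (extEv d Λev ψ φe)) x))
          / evenZ β d U Λev ψ))

/-! ### Auxiliary lemmas -/

section Aux

variable {d : ℕ} {β A B : ℝ} {U : ℝ → ℝ}

lemma dirv_not (p : Fin d × Bool) : dirv d (p.1, !p.2) = - dirv d p := by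
  unfold dirv
  cases p.2 <;> simp

lemma add_dirv_not (x : LatZ d) (p : Fin d × Bool) :
    x + dirv d p + dirv d (p.1, !p.2) = x := by
  rw [dirv_not]; abel

lemma even_add_dirv (x : LatZ d) (p : Fin d × Bool) :
    Even (∑ i, (x + dirv d p) i) ↔ ¬ Even (∑ i, x i) := by
  have h2 : ∑ i, dirv d p i = if p.2 then 1 else -1 := by
    unfold dirv
    split <;> simp [Fintype.sum_pi_single']
  have h1 : ∑ i, (x + dirv d p) i = (∑ i, x i) + ∑ i, dirv d p i := by
    simp [Finset.sum_add_distrib]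
  rw [h1, h2, Int.even_iff, Int.not_even_iff]
  split <;> omega

lemma mem_assoc_iff {Λev : Finset (LatZ d)} {x : LatZ d} :
    x ∈ assocSet d Λev ↔ x ∈ Λev ∨ ∃ z ∈ Λev, ∃ p : Fin d × Bool, x = z + dirv d p := by
  simp [assocSet, eq_comm]

lemma evenMemΛ {Λev : Finset (LatZ d)} (hΛev : ∀ x ∈ Λev, Even (∑ i, x i)) {x : LatZ d}
    (hx : x ∈ assocSet d Λev) (he : Even (∑ i, x i)) : x ∈ Λev := by
  rcases mem_assoc_iff.1 hx with h | ⟨z, hz, p, rfl⟩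
  · exact h
  · exact absurd (hΛev z hz) ((even_add_dirv z p).1 he)

lemma memΛ_of_memΛev {Λev : Finset (LatZ d)} {x : LatZ d} (hx : x ∈ Λev) :
    x ∈ assocSet d Λev :=
  Finset.mem_union_left _ hx

lemma nbr_memΛ {Λev : Finset (LatZ d)} {x : LatZ d} (hx : x ∈ Λev) (p : Fin d × Bool) :
    x + dirv d p ∈ assocSet d Λev :=
  mem_assoc_iff.2 (Or.inr ⟨x, hx, p, rfl⟩)

end Aux
section Aux2

variable {d : ℕ} {β A B : ℝ} {U : ℝ → ℝ}

lemma add_dirv_not' (x : LatZ d) (i : Fin d) (b : Bool) :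
    x + dirv d (i, b) + dirv d (i, !b) = x := by
  have := dirv_not (d := d) (i, b)
  simp only at this
  rw [this]; abel

lemma Hsplit {Λev : Finset (LatZ d)} (hΛev : ∀ x ∈ Λev, Even (∑ i, x i))
    (hsym : ∀ s, U (-s) = U s) (w : LatZ d → ℝ) :
    gibbsH d U (assocSet d Λev) w
      = 2 * ∑ y ∈ oddPart d Λev, ∑ p : Fin d × Bool, U (w (y + dirv d p) - w y) := by
  classical
  set Λ := assocSet d Λev with hΛ
  have hswap :
      ∑ p : Fin d × Bool,
          ∑ x ∈ (Λ.filter (fun x => x + dirv d p ∈ Λ)).filter (fun x => Even (∑ i, x i)),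
            U (w (x + dirv d p) - w x)
        = ∑ p : Fin d × Bool,
            ∑ x ∈ (Λ.filter (fun x => x + dirv d p ∈ Λ)).filter (fun x => ¬ Even (∑ i, x i)),
              U (w (x + dirv d p) - w x) := by
    rw [Finset.sum_sigma', Finset.sum_sigma']
    refine Finset.sum_nbij' (fun q => ⟨(q.1.1, !q.1.2), q.2 + dirv d q.1⟩)
      (fun q => ⟨(q.1.1, !q.1.2), q.2 + dirv d q.1⟩) ?_ ?_ ?_ ?_ ?_
    · rintro ⟨⟨i, b⟩, x⟩ hq
      simp only [Finset.mem_sigma, Finset.mem_univ, Finset.mem_filter, true_and] at hq ⊢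
      obtain ⟨⟨hxΛ, hxe⟩, hev⟩ := hq
      refine ⟨⟨hxe, ?_⟩, ?_⟩
      · rw [add_dirv_not' x i b]; exact hxΛ
      · rw [even_add_dirv]; simpa using hev
    · rintro ⟨⟨i, b⟩, x⟩ hq
      simp only [Finset.mem_sigma, Finset.mem_univ, Finset.mem_filter, true_and] at hq ⊢
      obtain ⟨⟨hxΛ, hxe⟩, hev⟩ := hq
      refine ⟨⟨hxe, ?_⟩, ?_⟩
      · rw [add_dirv_not' x i b]; exact hxΛ
      · exact (even_add_dirv x (i, b)).2 hev
    · rintro ⟨⟨i, b⟩, x⟩ _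
      simp [add_dirv_not' x i b]
    · rintro ⟨⟨i, b⟩, x⟩ _
      simp [add_dirv_not' x i b]
    · rintro ⟨⟨i, b⟩, x⟩ _
      simp only
      rw [add_dirv_not' x i b, ← hsym, neg_sub]
  have hS1 : (∑ p : Fin d × Bool, ∑ x ∈ Λ.filter (fun x => x + dirv d p ∈ Λ),
        U (w (x + dirv d p) - w x))
      = 2 * ∑ p : Fin d × Bool,
          ∑ x ∈ (Λ.filter (fun x => x + dirv d p ∈ Λ)).filter (fun x => ¬ Even (∑ i, x i)),
            U (w (x + dirv d p) - w x) := by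
    rw [two_mul]
    nth_rewrite 1 [← hswap]
    rw [← Finset.sum_add_distrib]
    refine Finset.sum_congr rfl fun p _ => ?_
    exact (Finset.sum_filter_add_sum_filter_not (Λ.filter (fun x => x + dirv d p ∈ Λ))
      (fun x => Even (∑ i, x i)) (fun x => U (w (x + dirv d p) - w x))).symm
  have hS2 : ∀ p : Fin d × Bool, Λ.filter (fun x => x + dirv d p ∉ Λ)
      = (Λ.filter (fun x => x + dirv d p ∉ Λ)).filter (fun x => ¬ Even (∑ i, x i)) := by
    intro p
    ext x
    simp only [Finset.mem_filter]
    constructor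
    · rintro ⟨h1, h2⟩
      exact ⟨⟨h1, h2⟩, fun hev => h2 (nbr_memΛ (evenMemΛ hΛev h1 hev) p)⟩
    · rintro ⟨⟨h1, h2⟩, _⟩; exact ⟨h1, h2⟩
  have hmerge : ∀ p : Fin d × Bool,
      ((∑ x ∈ (Λ.filter (fun x => x + dirv d p ∈ Λ)).filter (fun x => ¬ Even (∑ i, x i)),
          U (w (x + dirv d p) - w x))
        + ∑ x ∈ (Λ.filter (fun x => x + dirv d p ∉ Λ)).filter (fun x => ¬ Even (∑ i, x i)),
            U (w (x + dirv d p) - w x))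
      = ∑ x ∈ Λ.filter (fun x => ¬ Even (∑ i, x i)), U (w (x + dirv d p) - w x) := by
    intro p
    rw [Finset.filter_comm, Finset.filter_comm (fun x => x + dirv d p ∉ Λ)]
    exact Finset.sum_filter_add_sum_filter_not _ _ _
  show (∑ p : Fin d × Bool, ∑ x ∈ Λ.filter (fun x => x + dirv d p ∈ Λ),
        U (w (x + dirv d p) - w x))
      + 2 * ∑ p : Fin d × Bool, ∑ x ∈ Λ.filter (fun x => x + dirv d p ∉ Λ),
          U (w (x + dirv d p) - w x) = _
  rw [hS1]
  have h2' : (∑ p : Fin d × Bool, ∑ x ∈ Λ.filter (fun x => x + dirv d p ∉ Λ),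
        U (w (x + dirv d p) - w x))
      = ∑ p : Fin d × Bool,
          ∑ x ∈ (Λ.filter (fun x => x + dirv d p ∉ Λ)).filter (fun x => ¬ Even (∑ i, x i)),
            U (w (x + dirv d p) - w x) :=
    Finset.sum_congr rfl fun p _ => by rw [← hS2 p]
  rw [h2', ← mul_add, ← Finset.sum_add_distrib]
  rw [Finset.sum_congr rfl fun p (_ : p ∈ Finset.univ) => hmerge p]
  rw [Finset.sum_comm]
  rfl

end Aux2
section Aux3

variable {d : ℕ} {β A B : ℝ} {U : ℝ → ℝ}

/-- Restriction of a configuration on `Λ` to `Λ_even`. -/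
def projE (Λev : Finset (LatZ d)) (φ : {x : LatZ d // x ∈ assocSet d Λev} → ℝ) :
    {x : LatZ d // x ∈ Λev} → ℝ :=
  fun x => φ ⟨x.1, memΛ_of_memΛev x.2⟩

/-- Restriction of a configuration on `Λ` to `Λ_odd`. -/
def projO (Λev : Finset (LatZ d)) (φ : {x : LatZ d // x ∈ assocSet d Λev} → ℝ) :
    {x : LatZ d // x ∈ oddPart d Λev} → ℝ :=
  fun y => φ ⟨y.1, (Finset.mem_filter.1 y.2).1⟩

/-- The Hamiltonian as a function of even and odd configurations separately. -/
def Kfun (d : ℕ) (U : ℝ → ℝ) (Λev : Finset (LatZ d)) (ψ : LatZ d → ℝ)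
    (a : {x : LatZ d // x ∈ Λev} → ℝ) (b : {x : LatZ d // x ∈ oddPart d Λev} → ℝ) : ℝ :=
  2 * ∑ y : {x : LatZ d // x ∈ oddPart d Λev}, ∑ p : Fin d × Bool,
    U (fullOf d (extEv d Λev ψ a) (y.1 + dirv d p) - b y)

lemma nbrVal {Λev : Finset (LatZ d)} (hΛev : ∀ x ∈ Λev, Even (∑ i, x i)) (ψ : LatZ d → ℝ)
    (φ : {x : LatZ d // x ∈ assocSet d Λev} → ℝ) {y : LatZ d} (hy : y ∈ oddPart d Λev)
    (p : Fin d × Bool) :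
    extLam d (assocSet d Λev) ψ φ (y + dirv d p)
      = fullOf d (extEv d Λev ψ (projE Λev φ)) (y + dirv d p) := by
  have hyodd : ¬ Even (∑ i, y i) := (Finset.mem_filter.1 hy).2
  have heven : Even (∑ i, (y + dirv d p) i) := (even_add_dirv y p).2 hyodd
  unfold extLam fullOf extEv projE
  rw [dif_pos heven]
  by_cases h : y + dirv d p ∈ Λev
  · rw [dif_pos (memΛ_of_memΛev h)]
    simp only [dif_pos h]
  · have hΛ : y + dirv d p ∉ assocSet d Λev := fun hin => h (evenMemΛ hΛev hin heven)
    rw [dif_neg hΛ]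
    simp only [dif_neg h]

lemma H_eq_K {Λev : Finset (LatZ d)} (hΛev : ∀ x ∈ Λev, Even (∑ i, x i))
    (hsym : ∀ s, U (-s) = U s) (ψ : LatZ d → ℝ)
    (φ : {x : LatZ d // x ∈ assocSet d Λev} → ℝ) :
    gibbsH d U (assocSet d Λev) (extLam d (assocSet d Λev) ψ φ)
      = Kfun d U Λev ψ (projE Λev φ) (projO Λev φ) := by
  rw [Hsplit hΛev hsym]
  unfold Kfun
  rw [← Finset.sum_coe_sort (oddPart d Λev)
    (fun y => ∑ p : Fin d × Bool, U (extLam d (assocSet d Λev) ψ φ (y + dirv d p)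
      - extLam d (assocSet d Λev) ψ φ y))]
  refine congrArg (2 * ·) (Finset.sum_congr rfl fun y _ => Finset.sum_congr rfl fun p _ => ?_)
  rw [nbrVal hΛev ψ φ y.2 p]
  have hw : extLam d (assocSet d Λev) ψ φ y.1 = projO Λev φ y := by
    unfold extLam projO
    rw [dif_pos (Finset.mem_filter.1 y.2).1]
  rw [hw]

/-- Even sites of `Λ` are `Λ_even`. -/
def eEv (Λev : Finset (LatZ d)) (hΛev : ∀ x ∈ Λev, Even (∑ i, x i)) :
    {y : {x : LatZ d // x ∈ assocSet d Λev} // Even (∑ i, y.1 i)} ≃ {x : LatZ d // x ∈ Λev} where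
  toFun y := ⟨y.1.1, evenMemΛ hΛev y.1.2 y.2⟩
  invFun x := ⟨⟨x.1, memΛ_of_memΛev x.2⟩, hΛev x.1 x.2⟩
  left_inv y := by ext; rfl
  right_inv x := by ext; rfl

/-- Odd sites of `Λ` are `Λ_odd`. -/
def eOd (Λev : Finset (LatZ d)) :
    {y : {x : LatZ d // x ∈ assocSet d Λev} // ¬ Even (∑ i, y.1 i)}
      ≃ {x : LatZ d // x ∈ oddPart d Λev} where
  toFun y := ⟨y.1.1, Finset.mem_filter.2 ⟨y.1.2, y.2⟩⟩
  invFun z := ⟨⟨z.1, (Finset.mem_filter.1 z.2).1⟩, (Finset.mem_filter.1 z.2).2⟩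
  left_inv y := by ext; rfl
  right_inv z := by ext; rfl

/-- The splitting of `ℝ^Λ` into even and odd coordinates. -/
def fullEquiv (Λev : Finset (LatZ d)) (hΛev : ∀ x ∈ Λev, Even (∑ i, x i)) :
    ({x : LatZ d // x ∈ assocSet d Λev} → ℝ)
      ≃ᵐ (({x : LatZ d // x ∈ Λev} → ℝ) × ({x : LatZ d // x ∈ oddPart d Λev} → ℝ)) :=
  (MeasurableEquiv.piEquivPiSubtypeProd (fun _ : {x : LatZ d // x ∈ assocSet d Λev} => ℝ)
      (fun x => Even (∑ i, x.1 i))).trans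
    ((MeasurableEquiv.piCongrLeft (fun _ => ℝ) (eEv Λev hΛev)).prodCongr
      (MeasurableEquiv.piCongrLeft (fun _ => ℝ) (eOd Λev)))

lemma fullEquiv_mp (Λev : Finset (LatZ d)) (hΛev : ∀ x ∈ Λev, Even (∑ i, x i)) :
    MeasurePreserving (fullEquiv Λev hΛev) volume volume := by
  have h1 := volume_preserving_piEquivPiSubtypeProd
    (fun _ : {x : LatZ d // x ∈ assocSet d Λev} => ℝ) (fun x => Even (∑ i, x.1 i))
  have h2 := volume_measurePreserving_piCongrLeft (fun _ => ℝ) (eEv Λev hΛev)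
  have h3 := volume_measurePreserving_piCongrLeft (fun _ => ℝ) (eOd Λev)
  have h23 := h2.prod h3
  rw [← Measure.volume_eq_prod, ← Measure.volume_eq_prod] at h23
  exact h23.comp h1

lemma fullEquiv_fst (Λev : Finset (LatZ d)) (hΛev : ∀ x ∈ Λev, Even (∑ i, x i))
    (φ : {x : LatZ d // x ∈ assocSet d Λev} → ℝ) :
    (fullEquiv Λev hΛev φ).1 = projE Λev φ := by
  funext x
  show (MeasurableEquiv.piCongrLeft (fun _ => ℝ) (eEv Λev hΛev))
      (fun y : {y : {x : LatZ d // x ∈ assocSet d Λev} // Even (∑ i, y.1 i)} => φ y.1) x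
    = projE Λev φ x
  have hx : x = (eEv Λev hΛev) ((eEv Λev hΛev).symm x) := (Equiv.apply_symm_apply _ x).symm
  conv_lhs => rw [hx]
  rw [MeasurableEquiv.piCongrLeft_apply_apply]
  rfl

lemma fullEquiv_snd (Λev : Finset (LatZ d)) (hΛev : ∀ x ∈ Λev, Even (∑ i, x i))
    (φ : {x : LatZ d // x ∈ assocSet d Λev} → ℝ) :
    (fullEquiv Λev hΛev φ).2 = projO Λev φ := by
  funext x
  show (MeasurableEquiv.piCongrLeft (fun _ => ℝ) (eOd Λev))
      (fun y : {y : {x : LatZ d // x ∈ assocSet d Λev} // ¬ Even (∑ i, y.1 i)} => φ y.1) x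
    = projO Λev φ x
  have hx : x = (eOd Λev) ((eOd Λev).symm x) := (Equiv.apply_symm_apply _ x).symm
  conv_lhs => rw [hx]
  rw [MeasurableEquiv.piCongrLeft_apply_apply]
  rfl

lemma projE_symm (Λev : Finset (LatZ d)) (hΛev : ∀ x ∈ Λev, Even (∑ i, x i))
    (z : ({x : LatZ d // x ∈ Λev} → ℝ) × ({x : LatZ d // x ∈ oddPart d Λev} → ℝ)) :
    projE Λev ((fullEquiv Λev hΛev).symm z) = z.1 := by
  rw [← fullEquiv_fst Λev hΛev, MeasurableEquiv.apply_symm_apply]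

lemma projO_symm (Λev : Finset (LatZ d)) (hΛev : ∀ x ∈ Λev, Even (∑ i, x i))
    (z : ({x : LatZ d // x ∈ Λev} → ℝ) × ({x : LatZ d // x ∈ oddPart d Λev} → ℝ)) :
    projO Λev ((fullEquiv Λev hΛev).symm z) = z.2 := by
  rw [← fullEquiv_snd Λev hΛev, MeasurableEquiv.apply_symm_apply]

end Aux3
section Aux4

variable {d : ℕ} {β A B : ℝ} {U : ℝ → ℝ}

lemma contOneDim (hUcont : Continuous U) (c : (Fin d × Bool) → ℝ) :
    Continuous fun t : ℝ => Real.exp (-(2*β) * ∑ p : Fin d × Bool, U (c p - t)) :=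
  Real.continuous_exp.comp (continuous_const.mul (continuous_finset_sum _ fun p _ =>
    hUcont.comp (continuous_const.sub continuous_id)))

lemma intOneDim (hd : 1 ≤ d) (hβ : 0 < β) (hUcont : Continuous U) (hA : 0 < A)
    (hA0 : ∀ η : ℝ, A * η ^ 2 - B ≤ U η) (c : (Fin d × Bool) → ℝ) :
    Integrable fun t : ℝ => Real.exp (-(2*β) * ∑ p : Fin d × Bool, U (c p - t)) := by
  set i₀ : Fin d × Bool := (⟨0, hd⟩, true)
  set n : ℝ := (Fintype.card (Fin d × Bool) : ℝ)
  have hint : Integrable fun t : ℝ =>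
      Real.exp (2*β*(n*B)) * Real.exp (-(2*β*A) * (t - c i₀)^2) := by
    refine Integrable.const_mul ?_ _
    exact (integrable_exp_neg_mul_sq (by positivity)).comp_sub_right (c i₀)
  refine Integrable.mono' hint (contOneDim hUcont c).aestronglyMeasurable ?_
  filter_upwards with t
  rw [Real.norm_eq_abs, abs_of_pos (Real.exp_pos _), ← Real.exp_add]
  refine Real.exp_le_exp.2 ?_
  have hsum : A * (c i₀ - t)^2 - n * B ≤ ∑ p : Fin d × Bool, U (c p - t) := by
    have h1 : ∑ p : Fin d × Bool, (A * (c p - t)^2 - B) ≤ ∑ p : Fin d × Bool, U (c p - t) :=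
      Finset.sum_le_sum fun p _ => hA0 _
    have h2 : ∑ p : Fin d × Bool, (A * (c p - t)^2 - B)
        = (∑ p : Fin d × Bool, A * (c p - t)^2) - n * B := by
      rw [Finset.sum_sub_distrib, Finset.sum_const, Finset.card_univ, nsmul_eq_mul]
    have h3 : A * (c i₀ - t)^2 ≤ ∑ p : Fin d × Bool, A * (c p - t)^2 :=
      Finset.single_le_sum (f := fun p : Fin d × Bool => A * (c p - t)^2)
        (fun p _ => by positivity) (Finset.mem_univ i₀)
    linarith
  have hsq : (c i₀ - t)^2 = (t - c i₀)^2 := by ring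
  nlinarith [mul_le_mul_of_nonneg_left hsum (by linarith : (0:ℝ) ≤ 2*β)]

lemma posOneDim (hd : 1 ≤ d) (hβ : 0 < β) (hUcont : Continuous U) (hA : 0 < A)
    (hA0 : ∀ η : ℝ, A * η ^ 2 - B ≤ U η) (c : (Fin d × Bool) → ℝ) :
    0 < ∫ t : ℝ, Real.exp (-(2*β) * ∑ p : Fin d × Bool, U (c p - t)) := by
  rw [integral_pos_iff_support_of_nonneg (fun t => (Real.exp_pos _).le)
    (intOneDim hd hβ hUcont hA hA0 c)]
  have hs : Function.support (fun t : ℝ =>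
      Real.exp (-(2*β) * ∑ p : Fin d × Bool, U (c p - t))) = Set.univ :=
    Set.eq_univ_of_forall fun t => (Real.exp_pos _).ne'
  rw [hs]
  simp [Real.volume_univ]

end Aux4
section Aux5

variable {d : ℕ} {β A B : ℝ} {U : ℝ → ℝ}

lemma cont_extLam (Λev : Finset (LatZ d)) (ψ : LatZ d → ℝ) (z : LatZ d) :
    Continuous fun φ : {x : LatZ d // x ∈ assocSet d Λev} → ℝ =>
      extLam d (assocSet d Λev) ψ φ z := by
  unfold extLam
  by_cases h : z ∈ assocSet d Λev
  · simp only [dif_pos h]; exact continuous_apply _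
  · simp only [dif_neg h]; exact continuous_const

lemma cont_H (hUcont : Continuous U) (Λev : Finset (LatZ d)) (ψ : LatZ d → ℝ) :
    Continuous fun φ : {x : LatZ d // x ∈ assocSet d Λev} → ℝ =>
      gibbsH d U (assocSet d Λev) (extLam d (assocSet d Λev) ψ φ) := by
  unfold gibbsH
  refine Continuous.add ?_ (continuous_const.mul ?_) <;>
  · refine continuous_finset_sum _ fun p _ => continuous_finset_sum _ fun x _ => ?_
    exact hUcont.comp ((cont_extLam Λev ψ _).sub (cont_extLam Λev ψ _))

lemma cont_full (Λev : Finset (LatZ d)) (ψ : LatZ d → ℝ) (z : LatZ d) :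
    Continuous fun a : {x : LatZ d // x ∈ Λev} → ℝ => fullOf d (extEv d Λev ψ a) z := by
  unfold fullOf extEv
  by_cases h : Even (∑ i, z i)
  · simp only [dif_pos h]
    by_cases h2 : z ∈ Λev
    · simp only [dif_pos h2]; exact continuous_apply _
    · simp only [dif_neg h2]; exact continuous_const
  · simp only [dif_neg h]; exact continuous_const

lemma cont_K (hUcont : Continuous U) (Λev : Finset (LatZ d)) (ψ : LatZ d → ℝ) :
    Continuous fun z : ({x : LatZ d // x ∈ Λev} → ℝ) × ({x : LatZ d // x ∈ oddPart d Λev} → ℝ) =>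
      Kfun d U Λev ψ z.1 z.2 := by
  unfold Kfun
  refine continuous_const.mul (continuous_finset_sum _ fun y _ =>
    continuous_finset_sum _ fun p _ => hUcont.comp ?_)
  exact ((cont_full Λev ψ _).comp continuous_fst).sub ((continuous_apply y).comp continuous_snd)

lemma marginal (hd : 1 ≤ d) (hβ : 0 < β) (hUcont : Continuous U) (hA : 0 < A)
    (hA0 : ∀ η : ℝ, A * η ^ 2 - B ≤ U η) (Λev : Finset (LatZ d)) (ψ : LatZ d → ℝ)
    (a : {x : LatZ d // x ∈ Λev} → ℝ) :
    ∫⁻ b : {x : LatZ d // x ∈ oddPart d Λev} → ℝ,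
        ENNReal.ofReal (Real.exp (-β * Kfun d U Λev ψ a b))
      = ENNReal.ofReal (Real.exp
          (-(∑ x ∈ oddPart d Λev, Fodd β d U (fullOf d (extEv d Λev ψ a)) x))) := by
  classical
  set g := fullOf d (extEv d Λev ψ a) with hg
  set f : {x : LatZ d // x ∈ oddPart d Λev} → ℝ → ℝ :=
    fun y t => Real.exp (-(2*β) * ∑ p : Fin d × Bool, U (g (y.1 + dirv d p) - t)) with hf
  have hexp : ∀ b, Real.exp (-β * Kfun d U Λev ψ a b)
      = ∏ y : {x : LatZ d // x ∈ oddPart d Λev}, f y (b y) := by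
    intro b
    have h1 : -β * Kfun d U Λev ψ a b
        = ∑ y : {x : LatZ d // x ∈ oddPart d Λev},
            (-(2*β) * ∑ p : Fin d × Bool, U (g (y.1 + dirv d p) - b y)) := by
      unfold Kfun
      rw [show -β * (2 * ∑ y : {x : LatZ d // x ∈ oddPart d Λev}, ∑ p : Fin d × Bool,
          U (g (y.1 + dirv d p) - b y))
        = -(2*β) * ∑ y : {x : LatZ d // x ∈ oddPart d Λev}, ∑ p : Fin d × Bool,
          U (g (y.1 + dirv d p) - b y) from by ring, Finset.mul_sum]
    rw [h1, Real.exp_sum]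
  have hfi : ∀ y, Integrable (f y) := fun y => intOneDim hd hβ hUcont hA hA0 _
  have hprod_int : Integrable
      (fun b : {x : LatZ d // x ∈ oddPart d Λev} → ℝ => ∏ y, f y (b y)) :=
    Integrable.fintype_prod hfi
  calc ∫⁻ b : {x : LatZ d // x ∈ oddPart d Λev} → ℝ,
        ENNReal.ofReal (Real.exp (-β * Kfun d U Λev ψ a b))
      = ∫⁻ b : {x : LatZ d // x ∈ oddPart d Λev} → ℝ,
          ENNReal.ofReal (∏ y, f y (b y)) := by
        refine lintegral_congr fun b => ?_
        rw [hexp b]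
    _ = ENNReal.ofReal (∫ b : {x : LatZ d // x ∈ oddPart d Λev} → ℝ, ∏ y, f y (b y)) :=
        (ofReal_integral_eq_lintegral_ofReal hprod_int (Filter.Eventually.of_forall fun b =>
          Finset.prod_nonneg fun y _ => (Real.exp_pos _).le)).symm
    _ = ENNReal.ofReal (∏ y, ∫ t, f y t) := by
        exact congrArg ENNReal.ofReal (integral_fintype_prod_eq_prod (μ := fun _ => volume) f)
    _ = ENNReal.ofReal (Real.exp
          (-(∑ x ∈ oddPart d Λev, Fodd β d U g x))) := by
        congr 1
        have hsum : -(∑ x ∈ oddPart d Λev, Fodd β d U g x)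
            = ∑ x ∈ oddPart d Λev, (- Fodd β d U g x) := by
          rw [← Finset.sum_neg_distrib]
        rw [hsum, Real.exp_sum, ← Finset.prod_coe_sort (oddPart d Λev)
          (fun x => Real.exp (- Fodd β d U g x))]
        refine Finset.prod_congr rfl fun y _ => ?_
        have hpos : 0 < ∫ t, f y t := posOneDim hd hβ hUcont hA hA0 _
        rw [Fodd, neg_neg, Real.exp_log hpos]

end Aux5
section Aux6

variable {d : ℕ} {β A B : ℝ} {U : ℝ → ℝ}

lemma meas_Kfun (hUcont : Continuous U) (Λev : Finset (LatZ d)) (ψ : LatZ d → ℝ) :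
    Measurable fun z : ({x : LatZ d // x ∈ Λev} → ℝ)
        × ({x : LatZ d // x ∈ oddPart d Λev} → ℝ) =>
      ENNReal.ofReal (Real.exp (-β * Kfun d U Λev ψ z.1 z.2)) :=
  (Real.continuous_exp.comp (continuous_const.mul (cont_K hUcont Λev ψ))).measurable.ennreal_ofReal

lemma keyTonelli (hβ : 0 < β) (hUcont : Continuous U) (hsym : ∀ s, U (-s) = U s)
    {Λev : Finset (LatZ d)} (hΛev : ∀ x ∈ Λev, Even (∑ i, x i)) (ψ : LatZ d → ℝ) :
    ∫⁻ φ : {x : LatZ d // x ∈ assocSet d Λev} → ℝ,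
        ENNReal.ofReal (Real.exp (-β * gibbsH d U (assocSet d Λev)
          (extLam d (assocSet d Λev) ψ φ)))
      = ∫⁻ a : {x : LatZ d // x ∈ Λev} → ℝ,
          ∫⁻ b : {x : LatZ d // x ∈ oddPart d Λev} → ℝ,
            ENNReal.ofReal (Real.exp (-β * Kfun d U Λev ψ a b)) := by
  have hgH : Measurable fun φ : {x : LatZ d // x ∈ assocSet d Λev} → ℝ =>
      ENNReal.ofReal (Real.exp (-β * gibbsH d U (assocSet d Λev)
        (extLam d (assocSet d Λev) ψ φ))) :=
    (Real.continuous_exp.comp (continuous_const.mul (cont_H hUcont Λev ψ))).measurable.ennreal_ofReal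
  rw [← ((fullEquiv_mp Λev hΛev).symm (fullEquiv Λev hΛev)).lintegral_comp hgH]
  have hpt : ∀ z, ENNReal.ofReal (Real.exp (-β * gibbsH d U (assocSet d Λev)
      (extLam d (assocSet d Λev) ψ ((fullEquiv Λev hΛev).symm z))))
      = ENNReal.ofReal (Real.exp (-β * Kfun d U Λev ψ z.1 z.2)) := by
    intro z
    rw [H_eq_K hΛev hsym ψ ((fullEquiv Λev hΛev).symm z), projE_symm Λev hΛev,
      projO_symm Λev hΛev]
  rw [lintegral_congr hpt, Measure.volume_eq_prod,
    lintegral_prod _ (meas_Kfun hUcont Λev ψ).aemeasurable]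

lemma meas_evenDens (hd : 1 ≤ d) (hβ : 0 < β) (hUcont : Continuous U) (hA : 0 < A)
    (hA0 : ∀ η : ℝ, A * η ^ 2 - B ≤ U η) (Λev : Finset (LatZ d)) (ψ : LatZ d → ℝ) :
    Measurable fun a : {x : LatZ d // x ∈ Λev} → ℝ =>
      Real.exp (-(∑ x ∈ oddPart d Λev, Fodd β d U (fullOf d (extEv d Λev ψ a)) x)) := by
  have hgmeas : Measurable fun a : {x : LatZ d // x ∈ Λev} → ℝ =>
      ∫⁻ b : {x : LatZ d // x ∈ oddPart d Λev} → ℝ,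
        ENNReal.ofReal (Real.exp (-β * Kfun d U Λev ψ a b)) :=
    Measurable.lintegral_prod_right (meas_Kfun hUcont Λev ψ)
  have heq : (fun a : {x : LatZ d // x ∈ Λev} → ℝ =>
      Real.exp (-(∑ x ∈ oddPart d Λev, Fodd β d U (fullOf d (extEv d Λev ψ a)) x)))
      = fun a => (∫⁻ b : {x : LatZ d // x ∈ oddPart d Λev} → ℝ,
          ENNReal.ofReal (Real.exp (-β * Kfun d U Λev ψ a b))).toReal := by
    funext a
    rw [marginal hd hβ hUcont hA hA0 Λev ψ a, ENNReal.toReal_ofReal (Real.exp_pos _).le]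
  rw [heq]
  exact hgmeas.ennreal_toReal

lemma Zeq (hd : 1 ≤ d) (hβ : 0 < β) (hUcont : Continuous U) (hsym : ∀ s, U (-s) = U s)
    (hA : 0 < A) (hA0 : ∀ η : ℝ, A * η ^ 2 - B ≤ U η)
    {Λev : Finset (LatZ d)} (hΛev : ∀ x ∈ Λev, Even (∑ i, x i)) (ψ : LatZ d → ℝ) :
    gibbsZ β d U (assocSet d Λev) ψ = evenZ β d U Λev ψ := by
  unfold gibbsZ evenZ
  rw [integral_eq_lintegral_of_nonneg_ae (f := fun φ => Real.exp (-β * gibbsH d U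
      (assocSet d Λev) (extLam d (assocSet d Λev) ψ φ))) (Filter.Eventually.of_forall fun φ =>
      (Real.exp_pos _).le)
      (Real.continuous_exp.comp (continuous_const.mul (cont_H hUcont Λev ψ))).aestronglyMeasurable,
    integral_eq_lintegral_of_nonneg_ae (Filter.Eventually.of_forall fun a =>
      (Real.exp_pos _).le)
      (meas_evenDens hd hβ hUcont hA hA0 Λev ψ).aestronglyMeasurable,
    keyTonelli hβ hUcont hsym hΛev ψ]
  congr 1
  refine lintegral_congr fun a => ?_
  rw [marginal hd hβ hUcont hA hA0 Λev ψ a]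

end Aux6
section Aux7
variable {d : ℕ} {β A B : ℝ} {U : ℝ → ℝ}

lemma cont_K_left (hUcont : Continuous U) (Λev : Finset (LatZ d)) (ψ : LatZ d → ℝ)
    (a : {x : LatZ d // x ∈ Λev} → ℝ) :
    Continuous fun b : {x : LatZ d // x ∈ oddPart d Λev} → ℝ => Kfun d U Λev ψ a b := by
  unfold Kfun
  refine continuous_const.mul (continuous_finset_sum _ fun y _ =>
    continuous_finset_sum _ fun p _ => hUcont.comp ?_)
  exact continuous_const.sub (continuous_apply y)

lemma innerInt (hd : 1 ≤ d) (hβ : 0 < β) (hUcont : Continuous U) (hA : 0 < A)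
    (hA0 : ∀ η : ℝ, A * η ^ 2 - B ≤ U η) (Λev : Finset (LatZ d)) (ψ : LatZ d → ℝ)
    {Z : ℝ} (hZpos : 0 < Z) (hZeq : Z = evenZ β d U Λev ψ)
    (a : {x : LatZ d // x ∈ Λev} → ℝ) :
    ∫⁻ b : {x : LatZ d // x ∈ oddPart d Λev} → ℝ,
        ENNReal.ofReal (Real.exp (-β * Kfun d U Λev ψ a b) / Z)
      = ENNReal.ofReal (Real.exp (-(∑ x ∈ oddPart d Λev,
          Fodd β d U (fullOf d (extEv d Λev ψ a)) x)) / evenZ β d U Λev ψ) := by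
  have hEZpos : 0 < evenZ β d U Λev ψ := hZeq ▸ hZpos
  have hfb : Measurable fun b : {x : LatZ d // x ∈ oddPart d Λev} → ℝ =>
      ENNReal.ofReal (Real.exp (-β * Kfun d U Λev ψ a b)) :=
    (Real.continuous_exp.comp
      (continuous_const.mul (cont_K_left hUcont Λev ψ a))).measurable.ennreal_ofReal
  have h1 : ∀ b : {x : LatZ d // x ∈ oddPart d Λev} → ℝ,
      ENNReal.ofReal (Real.exp (-β * Kfun d U Λev ψ a b) / Z)
        = ENNReal.ofReal (Real.exp (-β * Kfun d U Λev ψ a b)) * (ENNReal.ofReal Z)⁻¹ := by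
    intro b
    rw [ENNReal.ofReal_div_of_pos hZpos, div_eq_mul_inv]
  rw [lintegral_congr h1, lintegral_mul_const _ hfb, marginal hd hβ hUcont hA hA0 Λev ψ a,
    hZeq, ENNReal.ofReal_div_of_pos hEZpos, div_eq_mul_inv]
end Aux7
section Aux8

variable {d : ℕ} {β A B : ℝ} {U : ℝ → ℝ}

lemma indInner (hd : 1 ≤ d) (hβ : 0 < β) (hUcont : Continuous U) (hA : 0 < A)
    (hA0 : ∀ η : ℝ, A * η ^ 2 - B ≤ U η) (Λev : Finset (LatZ d)) (ψ : LatZ d → ℝ)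
    {Z : ℝ} (hZpos : 0 < Z) (hZeq : Z = evenZ β d U Λev ψ)
    (s : Set ({x : LatZ d // x ∈ Λev} → ℝ)) (a : {x : LatZ d // x ∈ Λev} → ℝ) :
    (∫⁻ b : {x : LatZ d // x ∈ oddPart d Λev} → ℝ,
      (Prod.fst ⁻¹' s).indicator (fun z : ({x : LatZ d // x ∈ Λev} → ℝ)
        × ({x : LatZ d // x ∈ oddPart d Λev} → ℝ) =>
        ENNReal.ofReal (Real.exp (-β * Kfun d U Λev ψ z.1 z.2) / Z)) (a, b))
    = s.indicator (fun φe : {x : LatZ d // x ∈ Λev} → ℝ =>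
        ENNReal.ofReal (Real.exp (-(∑ x ∈ oddPart d Λev,
          Fodd β d U (fullOf d (extEv d Λev ψ φe)) x)) / evenZ β d U Λev ψ)) a := by
  by_cases has : a ∈ s
  · have h1 : ∀ b : {x : LatZ d // x ∈ oddPart d Λev} → ℝ,
        ((Prod.fst ⁻¹' s).indicator (fun z : ({x : LatZ d // x ∈ Λev} → ℝ)
          × ({x : LatZ d // x ∈ oddPart d Λev} → ℝ) =>
          ENNReal.ofReal (Real.exp (-β * Kfun d U Λev ψ z.1 z.2) / Z)) (a, b))
        = ENNReal.ofReal (Real.exp (-β * Kfun d U Λev ψ a b) / Z) := fun b =>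
      Set.indicator_of_mem (Set.mem_preimage.mpr has) _
    rw [lintegral_congr h1, Set.indicator_of_mem has]
    exact innerInt hd hβ hUcont hA hA0 Λev ψ hZpos hZeq a
  · have h1 : ∀ b : {x : LatZ d // x ∈ oddPart d Λev} → ℝ,
        ((Prod.fst ⁻¹' s).indicator (fun z : ({x : LatZ d // x ∈ Λev} → ℝ)
          × ({x : LatZ d // x ∈ oddPart d Λev} → ℝ) =>
          ENNReal.ofReal (Real.exp (-β * Kfun d U Λev ψ z.1 z.2) / Z)) (a, b)) = 0 := fun b =>
      Set.indicator_of_notMem (fun hmem => has (Set.mem_preimage.mp hmem)) _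
    rw [lintegral_congr h1, lintegral_zero, Set.indicator_of_notMem has]

lemma indPt (hsym : ∀ s, U (-s) = U s) {Λev : Finset (LatZ d)}
    (hΛev : ∀ x ∈ Λev, Even (∑ i, x i)) (ψ : LatZ d → ℝ) (Z : ℝ)
    (s : Set ({x : LatZ d // x ∈ Λev} → ℝ))
    (z : ({x : LatZ d // x ∈ Λev} → ℝ) × ({x : LatZ d // x ∈ oddPart d Λev} → ℝ)) :
    (projE Λev ⁻¹' s).indicator
      (fun φ : {x : LatZ d // x ∈ assocSet d Λev} → ℝ =>
        ENNReal.ofReal (Real.exp (-β * gibbsH d U (assocSet d Λev)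
          (extLam d (assocSet d Λev) ψ φ)) / Z))
      ((fullEquiv Λev hΛev).symm z)
    = (Prod.fst ⁻¹' s).indicator (fun z : ({x : LatZ d // x ∈ Λev} → ℝ)
        × ({x : LatZ d // x ∈ oddPart d Λev} → ℝ) =>
        ENNReal.ofReal (Real.exp (-β * Kfun d U Λev ψ z.1 z.2) / Z)) z := by
  by_cases hzs : z.1 ∈ s
  · have hmem : (fullEquiv Λev hΛev).symm z ∈ projE Λev ⁻¹' s := by
      simp only [Set.mem_preimage, projE_symm Λev hΛev]; exact hzs
    rw [Set.indicator_of_mem hmem, Set.indicator_of_mem (Set.mem_preimage.mpr hzs)]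
    rw [H_eq_K hΛev hsym ψ, projE_symm Λev hΛev, projO_symm Λev hΛev]
  · have hmem : (fullEquiv Λev hΛev).symm z ∉ projE Λev ⁻¹' s := by
      simp only [Set.mem_preimage, projE_symm Λev hΛev]; exact hzs
    rw [Set.indicator_of_notMem hmem,
      Set.indicator_of_notMem (fun hmem2 => hzs (Set.mem_preimage.mp hmem2))]

lemma projMargin (hd : 1 ≤ d) (hβ : 0 < β) (hUcont : Continuous U)
    (hsym : ∀ s, U (-s) = U s) (hA : 0 < A) (hA0 : ∀ η : ℝ, A * η ^ 2 - B ≤ U η)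
    {Λev : Finset (LatZ d)} (hΛev : ∀ x ∈ Λev, Even (∑ i, x i)) (ψ : LatZ d → ℝ)
    (hZpos : 0 < gibbsZ β d U (assocSet d Λev) ψ) :
    Measure.map (projE Λev)
      (volume.withDensity fun φ : {x : LatZ d // x ∈ assocSet d Λev} → ℝ =>
        ENNReal.ofReal (Real.exp (-β * gibbsH d U (assocSet d Λev)
          (extLam d (assocSet d Λev) ψ φ)) / gibbsZ β d U (assocSet d Λev) ψ))
    = volume.withDensity fun φe : {x : LatZ d // x ∈ Λev} → ℝ =>
        ENNReal.ofReal
          (Real.exp (-(∑ x ∈ oddPart d Λev, Fodd β d U (fullOf d (extEv d Λev ψ φe)) x))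
            / evenZ β d U Λev ψ) := by
  have hZeq := Zeq hd hβ hUcont hsym hA hA0 hΛev ψ
  have hmprojE : Measurable (projE Λev) :=
    measurable_pi_lambda _ fun x => measurable_pi_apply _
  have hρmeas : Measurable fun φ : {x : LatZ d // x ∈ assocSet d Λev} → ℝ =>
      ENNReal.ofReal (Real.exp (-β * gibbsH d U (assocSet d Λev)
        (extLam d (assocSet d Λev) ψ φ)) / gibbsZ β d U (assocSet d Λev) ψ) :=
    ((Real.continuous_exp.comp (continuous_const.mul (cont_H hUcont Λev ψ))).div_const
      _).measurable.ennreal_ofReal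
  have hKd : Measurable fun z : ({x : LatZ d // x ∈ Λev} → ℝ)
      × ({x : LatZ d // x ∈ oddPart d Λev} → ℝ) =>
      ENNReal.ofReal (Real.exp (-β * Kfun d U Λev ψ z.1 z.2)
        / gibbsZ β d U (assocSet d Λev) ψ) :=
    ((Real.continuous_exp.comp (continuous_const.mul (cont_K hUcont Λev ψ))).div_const
      _).measurable.ennreal_ofReal
  ext s hs
  rw [Measure.map_apply hmprojE hs, withDensity_apply _ (hmprojE hs), withDensity_apply _ hs,
    ← lintegral_indicator (hmprojE hs), ← lintegral_indicator hs,
    ← ((fullEquiv_mp Λev hΛev).symm (fullEquiv Λev hΛev)).lintegral_comp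
      (hρmeas.indicator (hmprojE hs))]
  rw [lintegral_congr (indPt hsym hΛev ψ (gibbsZ β d U (assocSet d Λev) ψ) s),
    Measure.volume_eq_prod, lintegral_prod _ ((hKd.indicator (measurable_fst hs)).aemeasurable)]
  exact lintegral_congr (indInner hd hβ hUcont hA hA0 Λev ψ hZpos hZeq s)

end Aux8
set_option maxHeartbeats 1000000 in
/-- Lemma `nuodd`: the restriction of the finite-volume Gibbs measure
to the even sites is the Gibbs measure with the coarse-grained Hamiltonian. -/
theorem statement4
    {d : ℕ} {β A B : ℝ} {U : ℝ → ℝ}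
    (hd : 1 ≤ d) (hβ : 0 < β)
    (hUcont : Continuous U) (hsym : ∀ s, U (-s) = U s)
    (hA : 0 < A) (hA0 : ∀ η : ℝ, A * η ^ 2 - B ≤ U η)
    (Λev : Finset (LatZ d)) (hΛev : ∀ x ∈ Λev, Even (∑ i, x i))
    (ψ : LatZ d → ℝ) :
    Measure.map (fun φ : LatZ d → ℝ => fun x : Esites d => φ (x : LatZ d))
        (gibbsMeasure β d U (assocSet d Λev) ψ)
      = evenGibbs β d U Λev ψ := by
  classical
  have hmext : Measurable (extLam d (assocSet d Λev) ψ) :=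
    measurable_pi_lambda _ fun z => (cont_extLam Λev ψ z).measurable
  have hmres : Measurable (fun φ : LatZ d → ℝ => fun x : Esites d => φ (x : LatZ d)) :=
    measurable_pi_lambda _ fun x => measurable_pi_apply _
  have hmprojE : Measurable (projE Λev) :=
    measurable_pi_lambda _ fun x => measurable_pi_apply _
  have hmextEv : Measurable (extEv d Λev ψ) := by
    refine measurable_pi_lambda _ fun x => ?_
    unfold extEv
    by_cases h : (x : LatZ d) ∈ Λev
    · simp only [dif_pos h]; exact measurable_pi_apply _
    · simp only [dif_neg h]; exact measurable_const
  unfold gibbsMeasure evenGibbs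
  rw [Measure.map_map hmres hmext]
  have hcomp : (fun φ : LatZ d → ℝ => fun x : Esites d => φ (x : LatZ d))
        ∘ (extLam d (assocSet d Λev) ψ)
      = (extEv d Λev ψ) ∘ (projE Λev) := by
    funext φ
    funext x
    show extLam d (assocSet d Λev) ψ φ (x : LatZ d) = extEv d Λev ψ (projE Λev φ) x
    unfold extLam extEv projE
    by_cases h : (x : LatZ d) ∈ Λev
    · rw [dif_pos h, dif_pos (memΛ_of_memΛev h)]
    · have hn : (x : LatZ d) ∉ assocSet d Λev := fun hin => h (evenMemΛ hΛev hin x.2)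
      rw [dif_neg h, dif_neg hn]
  rw [hcomp, ← Measure.map_map hmextEv hmprojE]
  congr 1
  have hZnn : 0 ≤ gibbsZ β d U (assocSet d Λev) ψ :=
    integral_nonneg fun φ => (Real.exp_pos _).le
  have hZeq := Zeq hd hβ hUcont hsym hA hA0 hΛev ψ
  rcases eq_or_lt_of_le hZnn with hZ0 | hZpos
  · -- degenerate case: the normalising constants vanish and both measures are zero.
    have h0 : (fun φ : {x : LatZ d // x ∈ assocSet d Λev} → ℝ => ENNReal.ofReal
        (Real.exp (-β * gibbsH d U (assocSet d Λev) (extLam d (assocSet d Λev) ψ φ))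
          / gibbsZ β d U (assocSet d Λev) ψ)) = fun _ => (0 : ENNReal) := by
      funext φ; rw [← hZ0]; simp
    have h0' : (fun φe : {x : LatZ d // x ∈ Λev} → ℝ => ENNReal.ofReal
        (Real.exp (-(∑ x ∈ oddPart d Λev, Fodd β d U (fullOf d (extEv d Λev ψ φe)) x))
          / evenZ β d U Λev ψ)) = fun _ => (0 : ENNReal) := by
      funext φe; rw [← hZeq, ← hZ0]; simp
    rw [h0, h0']
    have hwd : volume.withDensity (fun _ : {x : LatZ d // x ∈ assocSet d Λev} → ℝ =>
        (0 : ENNReal)) = 0 := withDensity_zero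
    have hwd' : volume.withDensity (fun _ : {x : LatZ d // x ∈ Λev} → ℝ =>
        (0 : ENNReal)) = 0 := withDensity_zero
    rw [hwd, hwd', Measure.map_zero]
  · exact projMargin hd hβ hUcont hsym hA hA0 hΛev ψ hZpos

end
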